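/- arXiv:1606.01715 — 4 statements merged into one kernel-verified Lean document; each statement's English description precedes it below -/
import Mathlib

section
/- If f is an arithmetic function, then for every n ≥ 1, (1*f)(a_n) = (1*f_α)(n); that is, ∑_{d | a_n} f(d) = ∑_{k | n} ∑_{m : α(m) = k} f(m). -/
open Finset

noncomputable def fibAlpha (n : ℕ) : ℕ := sInf {m | 0 < m ∧ n ∣ Nat.fib m}

lemma fibAlpha_mem {m j : ℕ} (hj : 0 < j) (h : m ∣ Nat.fib j) :
    0 < fibAlpha m ∧ m ∣ Nat.fib (fibAlpha m) := by
  have hne : {k | 0 < k ∧ m ∣ Nat.fib k}.Nonempty := ⟨j, hj, h⟩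
  have := Nat.sInf_mem hne
  exact this

lemma fibAlpha_dvd {m j : ℕ} (hj : 0 < j) (h : m ∣ Nat.fib j) :
    fibAlpha m ∣ j := by
  obtain ⟨hpos, hdvd⟩ := fibAlpha_mem hj h
  set α := fibAlpha m with hα
  have hg : m ∣ Nat.fib (Nat.gcd α j) := by
    rw [Nat.fib_gcd]
    exact Nat.dvd_gcd hdvd h
  have hgpos : 0 < Nat.gcd α j := Nat.gcd_pos_of_pos_right _ hj
  have hle : α ≤ Nat.gcd α j := Nat.sInf_le ⟨hgpos, hg⟩
  have hle' : Nat.gcd α j ≤ α := Nat.le_of_dvd hpos (Nat.gcd_dvd_left _ _)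
  have : Nat.gcd α j = α := le_antisymm hle' hle
  rw [← this]
  exact Nat.gcd_dvd_right _ _

/-- Corollary: `(1*f)(a_n) = (1*f_α)(n)`.  The inner sum over `{m : α m = k}` is
finite, being contained in `Icc 1 (fib k)`. -/
theorem one_conv_fib (f : ℕ → ℂ) (n : ℕ) (hn : 1 ≤ n) :
    ∑ d ∈ (Nat.fib n).divisors, f d
      = ∑ k ∈ n.divisors, ∑ m ∈ (Icc 1 (Nat.fib k)).filter (fun m => fibAlpha m = k), f m := by
  have hnpos : 0 < n := hn
  have hfibn : 0 < Nat.fib n := Nat.fib_pos.mpr hnpos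
  have key : (Nat.fib n).divisors
      = n.divisors.biUnion (fun k => (Icc 1 (Nat.fib k)).filter fun m => fibAlpha m = k) := by
    ext m
    simp only [Nat.mem_divisors, Finset.mem_biUnion, Finset.mem_filter, Finset.mem_Icc]
    constructor
    · rintro ⟨hdvd, -⟩
      have hmpos : 0 < m := Nat.pos_of_dvd_of_pos hdvd hfibn
      obtain ⟨hαpos, hαdvd⟩ := fibAlpha_mem hnpos hdvd
      refine ⟨fibAlpha m, ⟨fibAlpha_dvd hnpos hdvd, hnpos.ne'⟩,
        ⟨hmpos, Nat.le_of_dvd (Nat.fib_pos.mpr hαpos) hαdvd⟩, rfl⟩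
    · rintro ⟨k, ⟨hkdvd, -⟩, ⟨hm1, hm2⟩, hαk⟩
      have hkpos : 0 < k := Nat.pos_of_dvd_of_pos hkdvd hnpos
      have hfibk : 0 < Nat.fib k := Nat.fib_pos.mpr hkpos
      -- m ∣ fib k since m ∈ Icc 1 (fib k) and fibAlpha m = k means the set is nonempty
      have hne : {j | 0 < j ∧ m ∣ Nat.fib j}.Nonempty := by
        by_contra h
        rw [Set.not_nonempty_iff_eq_empty] at h
        have : fibAlpha m = 0 := by
          rw [fibAlpha, h, Nat.sInf_empty]
        omega
      obtain ⟨hpos, hdvd⟩ := Nat.sInf_mem hne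
      rw [show sInf {j | 0 < j ∧ m ∣ Nat.fib j} = fibAlpha m from rfl, hαk] at hdvd
      exact ⟨hdvd.trans (Nat.fib_dvd _ _ hkdvd), hfibn.ne'⟩
  rw [key, Finset.sum_biUnion]
  intro k hk k' hk' hne
  simp only [Finset.disjoint_left, Finset.mem_filter]
  rintro m ⟨-, h1⟩ ⟨-, h2⟩
  exact hne (h1 ▸ h2 ▸ rfl)
end

section
/- For real x ≥ 1, ∑_{n : α(n) ≤ x} Λ(n)·⌊x/α(n)⌋ = log ∏_{n ≤ x} a_n, where Λ is the von Mangoldt function. -/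
open Finset ArithmeticFunction

private lemma fib_shift (n : ℕ) : ∀ i j, i ≤ j →
    ((Nat.fib i : ZMod n) = Nat.fib j) → ((Nat.fib (i + 1) : ZMod n) = Nat.fib (j + 1)) →
    ((0 : ZMod n) = Nat.fib (j - i)) := by
  intro i
  induction i with
  | zero => intro j _ h1 _; simpa using h1
  | succ i ih =>
    intro j hj h1 h2
    obtain ⟨j', rfl⟩ : ∃ j', j = j' + 1 := ⟨j - 1, by omega⟩
    have key : (Nat.fib i : ZMod n) = Nat.fib j' := by
      have e1 : (Nat.fib i : ZMod n) = Nat.fib (i + 2) - Nat.fib (i + 1) := by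
        rw [Nat.fib_add_two]; push_cast; ring
      have e2 : (Nat.fib j' : ZMod n) = Nat.fib (j' + 2) - Nat.fib (j' + 1) := by
        rw [Nat.fib_add_two]; push_cast; ring
      rw [e1, e2, show i + 2 = (i + 1) + 1 from rfl, show j' + 2 = (j' + 1) + 1 from rfl, h2, h1]
    have := ih j' (by omega) key h1
    simpa [Nat.succ_sub_succ] using this

private lemma exists_fib_dvd (n : ℕ) (hn : 0 < n) : ∃ m, 0 < m ∧ n ∣ Nat.fib m := by
  haveI : NeZero n := ⟨hn.ne'⟩
  obtain ⟨i, j, hij, h⟩ := Finite.exists_ne_map_eq_of_infinite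
    (fun k : ℕ => ((Nat.fib k : ZMod n), (Nat.fib (k + 1) : ZMod n)))
  simp only [Prod.mk.injEq] at h
  rcases lt_or_gt_of_ne hij with hlt | hlt
  · refine ⟨j - i, by omega, ?_⟩
    rw [← ZMod.natCast_eq_zero_iff]
    exact (fib_shift n i j hlt.le h.1 h.2).symm
  · refine ⟨i - j, by omega, ?_⟩
    rw [← ZMod.natCast_eq_zero_iff]
    exact (fib_shift n j i hlt.le h.1.symm h.2.symm).symm

private lemma fibAlpha_mem_s6 (n : ℕ) (hn : 0 < n) :
    0 < fibAlpha n ∧ n ∣ Nat.fib (fibAlpha n) := by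
  have : {m | 0 < m ∧ n ∣ Nat.fib m}.Nonempty := exists_fib_dvd n hn
  exact Nat.sInf_mem this

private lemma fibAlpha_dvd_iff (n : ℕ) (hn : 0 < n) (m : ℕ) :
    n ∣ Nat.fib m ↔ fibAlpha n ∣ m := by
  obtain ⟨hα, hd⟩ := fibAlpha_mem_s6 n hn
  constructor
  · intro h
    rcases Nat.eq_zero_or_pos m with rfl | hm
    · exact Dvd.intro 0 rfl
    have hg : n ∣ Nat.fib (Nat.gcd (fibAlpha n) m) := by
      rw [Nat.fib_gcd]; exact Nat.dvd_gcd hd h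
    have hgpos : 0 < Nat.gcd (fibAlpha n) m := Nat.gcd_pos_of_pos_right _ hm
    have hle : fibAlpha n ≤ Nat.gcd (fibAlpha n) m := Nat.sInf_le ⟨hgpos, hg⟩
    have : Nat.gcd (fibAlpha n) m = fibAlpha n :=
      le_antisymm (Nat.gcd_le_left _ hα) hle
    rw [← this]; exact Nat.gcd_dvd_right _ _
  · intro h
    exact hd.trans (Nat.fib_dvd _ _ h)

theorem vonMangoldt_sum_fib (x : ℝ) (hx : 1 ≤ x) :
    ∑ n ∈ (Icc 1 (Nat.fib ⌊x⌋₊)).filter (fun n => fibAlpha n ≤ ⌊x⌋₊),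
        Λ n * (⌊x⌋₊ / fibAlpha n : ℕ)
      = Real.log (∏ n ∈ Icc 1 ⌊x⌋₊, (Nat.fib n : ℝ)) := by
  set N := ⌊x⌋₊ with hN
  have hN1 : 1 ≤ N := Nat.le_floor (by exact_mod_cast hx)
  -- RHS
  rw [Real.log_prod (fun n hn => by
    have : 0 < Nat.fib n := Nat.fib_pos.mpr (mem_Icc.mp hn).1
    exact_mod_cast this.ne')]
  have hRHS : ∀ m ∈ Icc 1 N, Real.log ((Nat.fib m : ℝ)) =
      ∑ d ∈ (Nat.fib m).divisors, Λ d := fun m _ => (vonMangoldt_sum).symm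
  rw [Finset.sum_congr rfl hRHS]
  -- LHS
  have hLHS : ∀ d ∈ (Icc 1 (Nat.fib N)).filter (fun n => fibAlpha n ≤ N),
      Λ d * ((N / fibAlpha d : ℕ) : ℝ) =
        ∑ m ∈ Icc 1 N, if fibAlpha d ∣ m then Λ d else 0 := by
    intro d hd
    rw [← Finset.sum_filter, Finset.sum_const, nsmul_eq_mul, mul_comm]
    congr 1
    rw [show Icc 1 N = Ioc 0 N from Finset.Icc_add_one_left_eq_Ioc ..]
    rw [Nat.Ioc_filter_dvd_card_eq_div]
  rw [Finset.sum_congr rfl hLHS, Finset.sum_comm]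
  refine Finset.sum_congr rfl fun m hm => ?_
  obtain ⟨hm1, hmN⟩ := mem_Icc.mp hm
  rw [← Finset.sum_filter]
  congr 1
  ext d
  simp only [mem_filter, mem_Icc, Nat.mem_divisors]
  have hfibm : Nat.fib m ≠ 0 := (Nat.fib_pos.mpr hm1).ne'
  constructor
  · rintro ⟨⟨⟨hd1, _⟩, _⟩, hdvd⟩
    exact ⟨(fibAlpha_dvd_iff d hd1 m).mpr hdvd, hfibm⟩
  · rintro ⟨hdvd, -⟩
    have hd1 : 0 < d := Nat.pos_of_ne_zero fun h => by subst h; exact hfibm (zero_dvd_iff.mp hdvd)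
    have hα : fibAlpha d ∣ m := (fibAlpha_dvd_iff d hd1 m).mp hdvd
    have hαle : fibAlpha d ≤ N := (Nat.le_of_dvd hm1 hα).trans hmN
    have hdle : d ≤ Nat.fib N :=
      (Nat.le_of_dvd (Nat.pos_of_ne_zero hfibm) hdvd).trans (Nat.fib_mono hmN)
    exact ⟨⟨⟨hd1, hdle⟩, hαle⟩, hα⟩
end

section
/- For every real x ≥ 1, ∑_{n : α(n) ≤ x} φ(n)·⌊x/α(n)⌋ = a_{⌊x⌋+2} - 1, where φ is Euler's totient function. -/
open Finset Nat

lemma dvd_fib_iff (n m : ℕ) (hm : 0 < m) : n ∣ Nat.fib m ↔ fibAlpha n ∣ m := by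
  constructor
  · intro h
    have hne : {k | 0 < k ∧ n ∣ Nat.fib k}.Nonempty := ⟨m, hm, h⟩
    have hmem := Nat.sInf_mem hne
    set a := fibAlpha n with ha
    have h1 : n ∣ Nat.fib (Nat.gcd a m) := by
      rw [Nat.fib_gcd]
      exact Nat.dvd_gcd hmem.2 h
    have hg : 0 < Nat.gcd a m := Nat.gcd_pos_of_pos_right _ hm
    have hle : a ≤ Nat.gcd a m := Nat.sInf_le ⟨hg, h1⟩
    have : Nat.gcd a m = a := le_antisymm (Nat.gcd_le_left _ hmem.1) hle
    rw [← this]; exact Nat.gcd_dvd_right _ _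
  · intro h
    have ha : 0 < fibAlpha n := by
      rcases Nat.eq_zero_or_pos (fibAlpha n) with h0 | h0
      · rw [h0] at h; omega
      · exact h0
    have hne : {k | 0 < k ∧ n ∣ Nat.fib k}.Nonempty := by
      by_contra hc
      rw [Set.not_nonempty_iff_eq_empty] at hc
      have : fibAlpha n = 0 := by rw [fibAlpha, hc]; simp
      omega
    exact (Nat.sInf_mem hne).2.trans (Nat.fib_dvd _ _ h)

theorem totient_sum_alpha (x : ℝ) (hx : 1 ≤ x) :
    ∑ n ∈ (Icc 1 (Nat.fib ⌊x⌋₊)).filter (fun n => fibAlpha n ≤ ⌊x⌋₊),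
        Nat.totient n * (⌊x⌋₊ / fibAlpha n)
      = Nat.fib (⌊x⌋₊ + 2) - 1 := by
  set N := ⌊x⌋₊ with hNdef
  have hN : 1 ≤ N := Nat.le_floor (by exact_mod_cast hx)
  -- drop the filter
  rw [Finset.sum_filter_of_ne (by
    intro n _ hne
    by_contra h
    push_neg at h
    exact hne (by rw [Nat.div_eq_of_lt h, mul_zero]))]
  calc ∑ n ∈ Icc 1 (Nat.fib N), φ n * (N / fibAlpha n)
      = ∑ n ∈ Icc 1 (Nat.fib N), φ n * #{m ∈ Icc 1 N | n ∣ Nat.fib m} := by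
        refine Finset.sum_congr rfl fun n _ => ?_
        congr 1
        rw [show (Icc 1 N) = Ioc 0 N from Finset.Icc_add_one_left_eq_Ioc 0 N]
        have heq : {m ∈ Ioc 0 N | n ∣ Nat.fib m} = {m ∈ Ioc 0 N | fibAlpha n ∣ m} := by
          exact Finset.filter_congr fun m hm =>
            dvd_fib_iff n m (Finset.mem_Ioc.mp hm).1
        rw [heq, Nat.Ioc_filter_dvd_card_eq_div]
    _ = ∑ n ∈ Icc 1 (Nat.fib N), ∑ m ∈ Icc 1 N, if n ∣ Nat.fib m then φ n else 0 := by
        refine Finset.sum_congr rfl fun n _ => ?_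
        rw [← Finset.sum_filter, Finset.sum_const, smul_eq_mul, mul_comm]
    _ = ∑ m ∈ Icc 1 N, ∑ n ∈ Icc 1 (Nat.fib N), if n ∣ Nat.fib m then φ n else 0 :=
        Finset.sum_comm
    _ = ∑ m ∈ Icc 1 N, Nat.fib m := by
        refine Finset.sum_congr rfl fun m hm => ?_
        rw [← Finset.sum_filter]
        have hm' := Finset.mem_Icc.mp hm
        have hfib : 0 < Nat.fib m := Nat.fib_pos.mpr (by omega)
        have : {n ∈ Icc 1 (Nat.fib N) | n ∣ Nat.fib m} = (Nat.fib m).divisors := by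
          ext n
          simp only [Finset.mem_filter, Finset.mem_Icc, Nat.mem_divisors]
          constructor
          · rintro ⟨_, hd⟩; exact ⟨hd, by omega⟩
          · rintro ⟨hd, _⟩
            refine ⟨⟨Nat.one_le_iff_ne_zero.mpr ?_, ?_⟩, hd⟩
            · rintro rfl; simp at hd; omega
            · exact (Nat.le_of_dvd hfib hd).trans (Nat.fib_mono hm'.2)
        rw [this, Nat.sum_totient]
    _ = Nat.fib (N + 2) - 1 := by
        have h1 : Icc 1 N = (Finset.range (N + 1)).erase 0 := by
          ext m; simp [Finset.mem_Icc, Finset.mem_erase]; omega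
        have h2 : Nat.fib (N + 2) = (∑ k ∈ Finset.range (N + 1), Nat.fib k) + 1 := Nat.fib_succ_eq_succ_sum (N + 1)
        rw [h1, Finset.sum_erase _ (by simp)]
        omega
end

section
/- For real x ≥ 1, ∑_{n : α(n) ≤ x} μ(n)·⌊x/α(n)⌋ equals 1 if 1 ≤ x < 2 and equals 2 if x ≥ 2. -/
open Finset

lemma fibAlpha_spec {n : ℕ} (h : fibAlpha n ≠ 0) :
    0 < fibAlpha n ∧ n ∣ Nat.fib (fibAlpha n) := by
  have hne : {m | 0 < m ∧ n ∣ Nat.fib m}.Nonempty := by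
    by_contra hne
    rw [Set.not_nonempty_iff_eq_empty] at hne
    simp [fibAlpha, hne] at h
  exact Nat.sInf_mem hne

lemma fib_dvd_iff {n : ℕ} (h : fibAlpha n ≠ 0) (m : ℕ) :
    n ∣ Nat.fib m ↔ fibAlpha n ∣ m := by
  obtain ⟨hpos, hdvd⟩ := fibAlpha_spec h
  constructor
  · intro hm
    rcases Nat.eq_zero_or_pos m with rfl | hm0
    · exact dvd_zero _
    · have hg : n ∣ Nat.fib (Nat.gcd m (fibAlpha n)) := by
        rw [Nat.fib_gcd]; exact Nat.dvd_gcd hm hdvd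
      have hgpos : 0 < Nat.gcd m (fibAlpha n) := Nat.gcd_pos_of_pos_left _ hm0
      have hle : fibAlpha n ≤ Nat.gcd m (fibAlpha n) := Nat.sInf_le ⟨hgpos, hg⟩
      have h2 : Nat.gcd m (fibAlpha n) = fibAlpha n :=
        le_antisymm (Nat.gcd_le_right _ hpos) hle
      exact h2 ▸ Nat.gcd_dvd_left m _
  · intro hm
    exact hdvd.trans (Nat.fib_dvd _ _ hm)

theorem moebius_sum_alpha_floor (x : ℝ) (hx : 1 ≤ x) :
    ∑ n ∈ (Icc 1 (Nat.fib ⌊x⌋₊)).filter (fun n => fibAlpha n ≤ ⌊x⌋₊),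
        (ArithmeticFunction.moebius n : ℤ) * (⌊x⌋₊ / fibAlpha n : ℕ)
      = if x < 2 then 1 else 2 := by
  set N := ⌊x⌋₊ with hNdef
  have hN1 : 1 ≤ N := Nat.le_floor (by exact_mod_cast hx)
  -- remove the filter
  have h1 : ∑ n ∈ (Icc 1 (Nat.fib N)).filter (fun n => fibAlpha n ≤ N),
        (ArithmeticFunction.moebius n : ℤ) * (N / fibAlpha n : ℕ)
      = ∑ n ∈ Icc 1 (Nat.fib N),
        (ArithmeticFunction.moebius n : ℤ) * (N / fibAlpha n : ℕ) := by
    apply Finset.sum_subset (Finset.filter_subset _ _)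
    intro n hn hnn
    simp only [Finset.mem_filter, hn, true_and, not_le] at hnn
    rw [Nat.div_eq_of_lt hnn]
    simp
  -- replace N / fibAlpha n by a cardinality
  have h2 : ∀ n ∈ Icc 1 (Nat.fib N),
      (N / fibAlpha n : ℕ) = ((Ioc 0 N).filter (fun m => n ∣ Nat.fib m)).card := by
    intro n _
    by_cases h : fibAlpha n = 0
    · rw [h, Nat.div_zero]
      symm
      rw [Finset.card_eq_zero, Finset.filter_eq_empty_iff]
      intro m hm hdvd
      have hmem : m ∈ {k | 0 < k ∧ n ∣ Nat.fib k} := ⟨(Finset.mem_Ioc.mp hm).1, hdvd⟩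
      have hpos : 0 < fibAlpha n := (Nat.sInf_mem ⟨m, hmem⟩).1
      omega
    · have : ((Ioc 0 N).filter (fun m => n ∣ Nat.fib m))
          = ((Ioc 0 N).filter (fun m => fibAlpha n ∣ m)) := by
        apply Finset.filter_congr
        intro m _
        simp [fib_dvd_iff h m]
      rw [this, Nat.Ioc_filter_dvd_card_eq_div]
  rw [h1, Finset.sum_congr rfl (fun n hn => by rw [h2 n hn])]
  -- expand card as sum and swap
  have h3 : ∑ n ∈ Icc 1 (Nat.fib N),
        (ArithmeticFunction.moebius n : ℤ) * (((Ioc 0 N).filter (fun m => n ∣ Nat.fib m)).card : ℤ)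
      = ∑ m ∈ Ioc 0 N, ∑ n ∈ Icc 1 (Nat.fib N),
          if n ∣ Nat.fib m then (ArithmeticFunction.moebius n : ℤ) else 0 := by
    rw [Finset.sum_comm]
    apply Finset.sum_congr rfl
    intro n _
    rw [← Finset.sum_filter, Finset.sum_const, nsmul_eq_mul, mul_comm]
  rw [h3]
  -- inner sum is sum over divisors
  have h4 : ∀ m ∈ Ioc 0 N, ∑ n ∈ Icc 1 (Nat.fib N),
        (if n ∣ Nat.fib m then (ArithmeticFunction.moebius n : ℤ) else 0)
      = if Nat.fib m = 1 then 1 else 0 := by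
    intro m hm
    obtain ⟨hm0, hmN⟩ := Finset.mem_Ioc.mp hm
    have hfibpos : 0 < Nat.fib m := Nat.fib_pos.mpr hm0
    have hdivs : (Icc 1 (Nat.fib N)).filter (fun n => n ∣ Nat.fib m) = (Nat.fib m).divisors := by
      ext n
      simp only [Finset.mem_filter, Finset.mem_Icc, Nat.mem_divisors]
      constructor
      · rintro ⟨⟨h1, h2⟩, h3⟩
        exact ⟨h3, hfibpos.ne'⟩
      · rintro ⟨h1, h2⟩
        have hn0 : 0 < n := Nat.pos_of_dvd_of_pos h1 hfibpos
        have hle : n ≤ Nat.fib m := Nat.le_of_dvd hfibpos h1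
        exact ⟨⟨hn0, hle.trans (Nat.fib_mono hmN)⟩, h1⟩
    rw [← Finset.sum_filter, hdivs]
    rw [← ArithmeticFunction.coe_mul_zeta_apply, ArithmeticFunction.moebius_mul_coe_zeta,
      ArithmeticFunction.one_apply]
  rw [Finset.sum_congr rfl h4]
  -- compute the final sum
  have hfib1 : ∀ m, 0 < m → (Nat.fib m = 1 ↔ m = 1 ∨ m = 2) := by
    intro m hm
    constructor
    · intro h
      by_contra hc
      push_neg at hc
      have h3 : 3 ≤ m := by omega
      have hle : Nat.fib 3 ≤ Nat.fib m := Nat.fib_mono h3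
      have hf3 : Nat.fib 3 = 2 := by rfl
      omega
    · rintro (rfl | rfl) <;> rfl
  have hx2 : x < 2 ↔ N = 1 := by
    constructor
    · intro h
      have : N < 2 := Nat.floor_lt (by linarith) |>.mpr h
      omega
    · intro h
      by_contra hc
      push_neg at hc
      have : 2 ≤ N := Nat.le_floor (by exact_mod_cast hc)
      omega
  by_cases hcase : x < 2
  · have hNeq : N = 1 := hx2.mp hcase
    rw [if_pos hcase, hNeq]
    have hioc : Ioc 0 1 = ({1} : Finset ℕ) := rfl
    rw [hioc, Finset.sum_singleton, Nat.fib_one, if_pos rfl]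
  · have hNge : 2 ≤ N := by
      rcases Nat.lt_or_ge N 2 with h | h
      · exfalso; exact hcase (hx2.mpr (by omega))
      · exact h
    rw [if_neg hcase]
    have : (Ioc 0 N).filter (fun m => Nat.fib m = 1) = {1, 2} := by
      ext m
      simp only [Finset.mem_filter, Finset.mem_Ioc, Finset.mem_insert, Finset.mem_singleton]
      constructor
      · rintro ⟨⟨h1, h2⟩, h3⟩
        exact (hfib1 m h1).mp h3
      · rintro (rfl | rfl)
        · exact ⟨⟨by omega, by omega⟩, rfl⟩
        · exact ⟨⟨by omega, by omega⟩, rfl⟩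
    rw [← Finset.sum_filter, this]
    norm_num
end
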